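/- For every odd integer p ≥ 3, with f₃(p) = (p²+2p+5)/(2p³+6p²+16p+12), one has f₃(p-2) + f₃(p) - 1/p = 36/(p⁷ + 7p⁵ + 28p³ - 36p). -/

import Mathlib

theorem madhava_sthaulya_third (p : ℤ) (hp : 3 ≤ p) (hodd : Odd p) :
    (((p : ℝ) - 2) ^ 2 + 2 * ((p : ℝ) - 2) + 5)
        / (2 * ((p : ℝ) - 2) ^ 3 + 6 * ((p : ℝ) - 2) ^ 2 + 16 * ((p : ℝ) - 2) + 12)
      + ((p : ℝ) ^ 2 + 2 * (p : ℝ) + 5)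
        / (2 * (p : ℝ) ^ 3 + 6 * (p : ℝ) ^ 2 + 16 * (p : ℝ) + 12)
      - 1 / (p : ℝ)
      = 36 / ((p : ℝ) ^ 7 + 7 * (p : ℝ) ^ 5 + 28 * (p : ℝ) ^ 3 - 36 * (p : ℝ)) := by
  have hp3 : (3 : ℝ) ≤ (p : ℝ) := by exact_mod_cast hp
  have h1 : 2 * ((p : ℝ) - 2) ^ 3 + 6 * ((p : ℝ) - 2) ^ 2 + 16 * ((p : ℝ) - 2) + 12 ≠ 0 := by
    nlinarith [sq_nonneg ((p:ℝ) - 2), sq_nonneg (p:ℝ)]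
  have h2 : 2 * (p : ℝ) ^ 3 + 6 * (p : ℝ) ^ 2 + 16 * (p : ℝ) + 12 ≠ 0 := by
    nlinarith [sq_nonneg (p:ℝ)]
  have h3 : (p : ℝ) ≠ 0 := by linarith
  have h4 : (p : ℝ) ^ 7 + 7 * (p : ℝ) ^ 5 + 28 * (p : ℝ) ^ 3 - 36 * (p : ℝ) ≠ 0 := by
    have hfac : (p : ℝ) ^ 7 + 7 * (p : ℝ) ^ 5 + 28 * (p : ℝ) ^ 3 - 36 * (p : ℝ)
        = (p : ℝ) * (((p : ℝ) ^ 2 - 1) * ((p : ℝ) ^ 4 + 8 * (p : ℝ) ^ 2 + 36)) := by ring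
    rw [hfac]
    have : (0:ℝ) < (p : ℝ) * (((p : ℝ) ^ 2 - 1) * ((p : ℝ) ^ 4 + 8 * (p : ℝ) ^ 2 + 36)) := by
      apply mul_pos (by linarith)
      apply mul_pos (by nlinarith) (by positivity)
    exact ne_of_gt this
  rw [div_add_div _ _ h1 h2, div_sub_div _ _ (mul_ne_zero h1 h2) h3,
    div_eq_div_iff (mul_ne_zero (mul_ne_zero h1 h2) h3) h4]
  ring
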